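/- Let z1, z3 ∈ ℂ be distinct points, let z2 and z4 be the circumcenters of triangles z1 w z3 (with third vertices w, w' on opposite sides of the line z1z3), and let α and β be the angles at w and w' respectively (the angles opposite the edge z1z3 in the two triangles). Then i(z2−z4)/(z1−z3) = (cot α + cot β)/2. -/

import Mathlib

open Complex Real

lemma cot_angle_aux (x y : ℂ) (h : ((starRingEnd ℂ) x * y).im ≠ 0) :
    Real.cos (InnerProductGeometry.angle x y) / Real.sin (InnerProductGeometry.angle x y)
      = ((starRingEnd ℂ) x * y).re / |((starRingEnd ℂ) x * y).im| := by
  have hx : x ≠ 0 := by rintro rfl; simp at h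
  have hy : y ≠ 0 := by rintro rfl; simp at h
  have hN : 0 < ‖x‖ * ‖y‖ := mul_pos (norm_pos_iff.2 hx) (norm_pos_iff.2 hy)
  have hc := InnerProductGeometry.cos_angle_mul_norm_mul_norm x y
  have hs := InnerProductGeometry.sin_angle_mul_norm_mul_norm x y
  rw [Complex.inner x y] at hc
  have hxx : (inner ℝ x x : ℝ) * (inner ℝ y y : ℝ) - (inner ℝ x y : ℝ) * (inner ℝ x y : ℝ)
      = (((starRingEnd ℂ) x * y).im)^2 := by
    rw [Complex.inner, Complex.inner, Complex.inner]
    simp only [Complex.mul_re, Complex.mul_im, Complex.conj_re, Complex.conj_im]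
    ring
  rw [hxx, Real.sqrt_sq_eq_abs] at hs
  have hcos : Real.cos (InnerProductGeometry.angle x y)
      = ((starRingEnd ℂ) x * y).re / (‖x‖ * ‖y‖) := by
    rw [eq_div_iff hN.ne', mul_comm ((starRingEnd ℂ) x)]; exact hc
  have hsin : Real.sin (InnerProductGeometry.angle x y)
      = |((starRingEnd ℂ) x * y).im| / (‖x‖ * ‖y‖) := by
    rw [eq_div_iff hN.ne']; exact hs
  rw [hcos, hsin]
  exact div_div_div_cancel_right₀ hN.ne' _ _

lemma circ_aux (d u c : ℂ)
    (h1 : ‖c‖ = ‖c - u‖)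
    (h2 : ‖c‖ = ‖c - d‖) :
    (2*c - d) * ((((starRingEnd ℂ) d * u).im : ℝ) : ℂ)
      = Complex.I * d * (((Complex.normSq u - ((starRingEnd ℂ) u * d).re : ℝ)) : ℂ) := by
  have e1 : Complex.normSq c = Complex.normSq (c - u) := by
    rw [← Complex.sq_norm, ← Complex.sq_norm, h1]
  have e2 : Complex.normSq c = Complex.normSq (c - d) := by
    rw [← Complex.sq_norm, ← Complex.sq_norm, h2]
  simp only [Complex.normSq_apply, Complex.sub_re, Complex.sub_im] at e1 e2
  refine Complex.ext ?_ ?_ <;>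
    simp only [Complex.mul_re, Complex.mul_im, Complex.sub_re, Complex.sub_im,
      Complex.ofReal_re, Complex.ofReal_im, Complex.I_re, Complex.I_im, Complex.conj_re,
      Complex.conj_im, Complex.normSq_apply, Complex.ofReal_sub, Complex.add_re, Complex.add_im,
      Complex.re_ofNat, Complex.im_ofNat, mul_zero, zero_mul, sub_zero, zero_sub, one_mul, mul_one]
  · linear_combination (-d.im) * e1 + u.im * e2
  · linear_combination d.re * e1 - u.re * e2

theorem stmt5 (z1 z3 w w' z2 z4 : ℂ) (h13 : z1 ≠ z3)
    (hw : 0 < ((starRingEnd ℂ) (z3 - z1) * (w - z1)).im)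
    (hw' : ((starRingEnd ℂ) (z3 - z1) * (w' - z1)).im < 0)
    (hz2a : ‖z2 - z1‖ = ‖z2 - w‖)
    (hz2b : ‖z2 - z1‖ = ‖z2 - z3‖)
    (hz4a : ‖z4 - z1‖ = ‖z4 - w'‖)
    (hz4b : ‖z4 - z1‖ = ‖z4 - z3‖)
    (α β : ℝ)
    (hα : α = InnerProductGeometry.angle (z1 - w) (z3 - w))
    (hβ : β = InnerProductGeometry.angle (z1 - w') (z3 - w')) :
    Complex.I * (z2 - z4) / (z1 - z3) =
      (((Real.cos α / Real.sin α + Real.cos β / Real.sin β) / 2 : ℝ) : ℂ) := by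
  have hd' : z1 - z3 ≠ 0 := sub_ne_zero.mpr h13
  set A := (starRingEnd ℂ) (z1 - w) * (z3 - w) with hA
  set B := (starRingEnd ℂ) (z1 - w') * (z3 - w') with hB
  have hAim : A.im = ((starRingEnd ℂ) (z3 - z1) * (w - z1)).im := by
    simp only [hA, Complex.mul_im, Complex.sub_re, Complex.sub_im, Complex.conj_re,
      Complex.conj_im]
    ring
  have hBim : B.im = ((starRingEnd ℂ) (z3 - z1) * (w' - z1)).im := by
    simp only [hB, Complex.mul_im, Complex.sub_re, Complex.sub_im, Complex.conj_re,
      Complex.conj_im]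
    ring
  have hA0 : 0 < A.im := hAim ▸ hw
  have hB0 : B.im < 0 := hBim ▸ hw'
  have hAre : A.re = Complex.normSq (w - z1) - ((starRingEnd ℂ) (w - z1) * (z3 - z1)).re := by
    simp only [hA, Complex.mul_re, Complex.sub_re, Complex.sub_im, Complex.conj_re,
      Complex.conj_im, Complex.normSq_apply]
    ring
  have hBre : B.re = Complex.normSq (w' - z1) - ((starRingEnd ℂ) (w' - z1) * (z3 - z1)).re := by
    simp only [hB, Complex.mul_re, Complex.sub_re, Complex.sub_im, Complex.conj_re,
      Complex.conj_im, Complex.normSq_apply]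
    ring
  have hcotA := cot_angle_aux (z1 - w) (z3 - w) (by rw [← hA]; exact hA0.ne')
  have hcotB := cot_angle_aux (z1 - w') (z3 - w') (by rw [← hB]; exact hB0.ne)
  rw [← hA, abs_of_pos hA0] at hcotA
  rw [← hB, abs_of_neg hB0] at hcotB
  have H2 := circ_aux (z3 - z1) (w - z1) (z2 - z1)
    (by rw [sub_sub_sub_cancel_right]; exact hz2a)
    (by rw [sub_sub_sub_cancel_right]; exact hz2b)
  have H4 := circ_aux (z3 - z1) (w' - z1) (z4 - z1)
    (by rw [sub_sub_sub_cancel_right]; exact hz4a)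
    (by rw [sub_sub_sub_cancel_right]; exact hz4b)
  rw [← hAim, ← hAre] at H2
  rw [← hBim, ← hBre] at H4
  have hAimC : ((A.im : ℝ) : ℂ) ≠ 0 := Complex.ofReal_ne_zero.mpr hA0.ne'
  have hBimC : ((B.im : ℝ) : ℂ) ≠ 0 := Complex.ofReal_ne_zero.mpr hB0.ne
  rw [hα, hβ, hcotA, hcotB, div_eq_iff hd']
  push_cast
  rw [div_add_div _ _ (by exact_mod_cast hA0.ne') (by
    simpa using hBimC)]
  field_simp
  linear_combination (-1 : ℂ) * ((-(Complex.I * ((B.im : ℝ) : ℂ))) * H2 + (Complex.I * ((A.im : ℝ) : ℂ)) * H4 +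
    ((z3 - z1) * (((B.re : ℝ) : ℂ) * ((A.im : ℝ) : ℂ) - ((A.re : ℝ) : ℂ) * ((B.im : ℝ) : ℂ))) *
      Complex.I_mul_I)
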